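/- Let D and E be pretriangulated categories, and let F: D → E be an exact (triangulated) functor, i.e., F commutes with the shift functors up to natural isomorphism and sends distinguished triangles to distinguished triangles. For a thick subcategory I of D, let ⟨F⟩(I) denote the smallest thick subcategory of E containing the image F(I); for a thick subcategory J of E, F^{-1}(J) := {a ∈ D | F(a) ∈ J} is a thick subcategory of D; and for a prime thick subcategory P, let P̄ denote the intersection of all thick subcategories strictly containing P. Then the following are equivalent: (1) ⟨F⟩ is injective on thick subcategories of D; (2) F^{-1}, from thick subcategories of E to thick subcategories of D, is surjective; (3) for every prime thick subcategory P of D, ⟨F⟩(P) ≠ ⟨F⟩(P̄); (4) for every prime thick subcategory P of D, there exists a prime thick subcategory Q of E with F^{-1}(Q) = P and F^{-1}(Q̄) ⊋ P; (5) F^{-1} ∘ ⟨F⟩ is the identity map on thick subcategories of D. -/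

import Mathlib

open CategoryTheory CategoryTheory.Limits CategoryTheory.Pretriangulated

universe v u v' u'

/-- A thick subcategory of a pretriangulated category, viewed as a class of objects:
it contains the zero objects and is closed under isomorphisms, shifts in both
directions, extensions, and retracts. -/
structure IsThickSubcat {C : Type u} [Category.{v} C] [Preadditive C] [HasZeroObject C]
    [HasShift C ℤ] [∀ n : ℤ, (shiftFunctor C n).Additive] [Pretriangulated C]
    (P : Set C) : Prop where
  zero_mem : ∀ X : C, IsZero X → X ∈ P
  iso_mem : ∀ {X Y : C}, (X ≅ Y) → X ∈ P → Y ∈ P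
  shift_mem : ∀ (X : C) (n : ℤ), X ∈ P → X⟦n⟧ ∈ P
  ext_mem : ∀ T ∈ distTriang C, T.obj₁ ∈ P → T.obj₃ ∈ P → T.obj₂ ∈ P
  retract_mem : ∀ (X Y : C), X ∈ P → ∀ (i : Y ⟶ X) (r : X ⟶ Y), i ≫ r = 𝟙 Y → Y ∈ P

variable {C : Type u} [Category.{v} C] [Preadditive C] [HasZeroObject C]
  [HasShift C ℤ] [∀ n : ℤ, (shiftFunctor C n).Additive] [Pretriangulated C]

/-- The smallest thick subcategory containing a class of objects `W`. -/
def thickClosure (W : Set C) : Set C := ⋂₀ {P : Set C | IsThickSubcat P ∧ W ⊆ P}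

/-- `P̄`: the intersection of all thick subcategories strictly containing `P`. -/
def thickInterAbove (P : Set C) : Set C := ⋂₀ {Q : Set C | IsThickSubcat Q ∧ P ⊂ Q}

/-- A prime thick subcategory: a thick subcategory `P` with `P ⊊ P̄`. -/
def IsPrimeThick (P : Set C) : Prop := IsThickSubcat P ∧ P ⊂ thickInterAbove P

/-! Auxiliary lemmas -/

lemma isThick_sInter {S : Set (Set C)} (hS : ∀ P ∈ S, IsThickSubcat P) :
    IsThickSubcat (⋂₀ S) where
  zero_mem X hX := fun P hP => (hS P hP).zero_mem X hX
  iso_mem e h := fun P hP => (hS P hP).iso_mem e (h P hP)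
  shift_mem X n h := fun P hP => (hS P hP).shift_mem X n (h P hP)
  ext_mem T hT h1 h3 := fun P hP => (hS P hP).ext_mem T hT (h1 P hP) (h3 P hP)
  retract_mem X Y h i r hir := fun P hP => (hS P hP).retract_mem X Y (h P hP) i r hir

lemma isThick_thickClosure (W : Set C) : IsThickSubcat (thickClosure W) :=
  isThick_sInter (fun _ hP => hP.1)

lemma isThick_thickInterAbove (P : Set C) : IsThickSubcat (thickInterAbove P) :=
  isThick_sInter (fun _ hP => hP.1)

lemma subset_thickClosure (W : Set C) : W ⊆ thickClosure W :=
  fun x hx _ hP => hP.2 hx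

lemma thickClosure_subset {W J : Set C} (hJ : IsThickSubcat J) (hWJ : W ⊆ J) :
    thickClosure W ⊆ J :=
  Set.sInter_subset_of_mem ⟨hJ, hWJ⟩

lemma thickClosure_mono {V W : Set C} (h : V ⊆ W) : thickClosure V ⊆ thickClosure W :=
  thickClosure_subset (isThick_thickClosure W) (h.trans (subset_thickClosure W))

lemma subset_thickInterAbove (P : Set C) : P ⊆ thickInterAbove P :=
  fun x hx _ hQ => hQ.2.1 hx

lemma thickInterAbove_subset {P R : Set C} (hR : IsThickSubcat R) (hPR : P ⊂ R) :
    thickInterAbove P ⊆ R :=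
  Set.sInter_subset_of_mem ⟨hR, hPR⟩

/-- Union of a nonempty chain of thick subcategories is thick. -/
lemma isThick_chain_sUnion {S : Set (Set C)} (hS : ∀ P ∈ S, IsThickSubcat P)
    (hchain : IsChain (· ⊆ ·) S) (hne : S.Nonempty) : IsThickSubcat (⋃₀ S) where
  zero_mem X hX := by
    obtain ⟨P, hP⟩ := hne
    exact ⟨P, hP, (hS P hP).zero_mem X hX⟩
  iso_mem e h := by
    obtain ⟨P, hP, hx⟩ := h
    exact ⟨P, hP, (hS P hP).iso_mem e hx⟩
  shift_mem X n h := by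
    obtain ⟨P, hP, hx⟩ := h
    exact ⟨P, hP, (hS P hP).shift_mem X n hx⟩
  ext_mem T hT h1 h3 := by
    obtain ⟨P, hP, hx1⟩ := h1
    obtain ⟨Q, hQ, hx3⟩ := h3
    rcases hchain.total hP hQ with hPQ | hQP
    · exact ⟨Q, hQ, (hS Q hQ).ext_mem T hT (hPQ hx1) hx3⟩
    · exact ⟨P, hP, (hS P hP).ext_mem T hT hx1 (hQP hx3)⟩
  retract_mem X Y h i r hir := by
    obtain ⟨P, hP, hx⟩ := h
    exact ⟨P, hP, (hS P hP).retract_mem X Y hx i r hir⟩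

/-- Zorn: given a thick `A` with `x ∉ A`, there is a thick subcategory maximal among
those containing `A` and not containing `x`; it is prime and `x ∈` its interAbove. -/
lemma exists_prime_above {A : Set C} (hA : IsThickSubcat A) {x : C} (hx : x ∉ A) :
    ∃ P : Set C, A ⊆ P ∧ IsPrimeThick P ∧ x ∉ P ∧ x ∈ thickInterAbove P := by
  set S : Set (Set C) := {Q | IsThickSubcat Q ∧ A ⊆ Q ∧ x ∉ Q} with hSdef
  obtain ⟨P, hAP, hPmax⟩ := zorn_subset_nonempty S
    (fun c hcS hchain hcne => by
      refine ⟨⋃₀ c, ⟨isThick_chain_sUnion (fun Q hQ => (hcS hQ).1) hchain hcne, ?_, ?_⟩,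
        fun s hs => Set.subset_sUnion_of_mem hs⟩
      · obtain ⟨Q, hQ⟩ := hcne
        exact ((hcS hQ).2.1).trans (Set.subset_sUnion_of_mem hQ)
      · rintro ⟨Q, hQ, hxQ⟩
        exact (hcS hQ).2.2 hxQ)
    A ⟨hA, le_refl A, hx⟩
  have hPS : P ∈ S := hPmax.1
  have hxnP : x ∉ P := hPS.2.2
  -- every thick R strictly containing P contains x
  have hmem : ∀ R : Set C, IsThickSubcat R → P ⊂ R → x ∈ R := by
    intro R hR hPR
    by_contra hxR
    exact hPR.2 (hPmax.2 ⟨hR, hAP.trans hPR.1, hxR⟩ hPR.1)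
  have hxbar : x ∈ thickInterAbove P := fun R hR => hmem R hR.1 hR.2
  exact ⟨P, hAP, ⟨hPS.1, ⟨subset_thickInterAbove P, fun h => hxnP (h hxbar)⟩⟩, hxnP, hxbar⟩

/-- For an exact (triangulated) functor `F : D → E` (commuting with shifts and sending
distinguished triangles to distinguished triangles), preimages of thick subcategories
are thick, and the following are equivalent:
(1) `I ↦ ⟨F(I)⟩` is injective on thick subcategories of `D`;
(2) `J ↦ F⁻¹(J)` is surjective from thick subcategories of `E` onto those of `D`;
(3) for every prime thick `P ⊆ D`, `⟨F(P)⟩ ≠ ⟨F(P̄)⟩`;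
(4) for every prime thick `P ⊆ D` there is a prime thick `Q ⊆ E` with `F⁻¹(Q) = P` and
    `F⁻¹(Q̄) ⊋ P`;
(5) `F⁻¹ ∘ ⟨F⟩` is the identity on thick subcategories of `D`. -/
theorem stmt_17 (D : Type u) [Category.{v} D] [Preadditive D] [HasZeroObject D]
    [HasShift D ℤ] [∀ n : ℤ, (shiftFunctor D n).Additive] [Pretriangulated D]
    (E : Type u') [Category.{v'} E] [Preadditive E] [HasZeroObject E]
    [HasShift E ℤ] [∀ n : ℤ, (shiftFunctor E n).Additive] [Pretriangulated E]
    (F : D ⥤ E) [F.CommShift ℤ] [F.IsTriangulated] :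
    (∀ J : Set E, IsThickSubcat J → IsThickSubcat (F.obj ⁻¹' J)) ∧
    [ Set.InjOn (fun I : Set D => thickClosure (F.obj '' I)) {I : Set D | IsThickSubcat I},
      ∀ I : Set D, IsThickSubcat I → ∃ J : Set E, IsThickSubcat J ∧ F.obj ⁻¹' J = I,
      ∀ P : Set D, IsPrimeThick P →
        thickClosure (F.obj '' P) ≠ thickClosure (F.obj '' thickInterAbove P),
      ∀ P : Set D, IsPrimeThick P → ∃ Q : Set E, IsPrimeThick Q ∧
        F.obj ⁻¹' Q = P ∧ P ⊂ F.obj ⁻¹' thickInterAbove Q,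
      ∀ I : Set D, IsThickSubcat I → F.obj ⁻¹' thickClosure (F.obj '' I) = I ].TFAE := by
  have hpre : ∀ J : Set E, IsThickSubcat J → IsThickSubcat (F.obj ⁻¹' J) := by
    intro J hJ
    constructor
    · intro X hX
      exact hJ.zero_mem _ (F.map_isZero hX)
    · intro X Y e h
      exact hJ.iso_mem (F.mapIso e) h
    · intro X n h
      exact hJ.iso_mem ((F.commShiftIso n).symm.app X) (hJ.shift_mem (F.obj X) n h)
    · intro T hT h1 h3
      exact hJ.ext_mem (F.mapTriangle.obj T) (F.map_distinguished T hT) h1 h3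
    · intro X Y h i r hir
      refine hJ.retract_mem (F.obj X) (F.obj Y) h (F.map i) (F.map r) ?_
      rw [← F.map_comp, hir, F.map_id]
  refine ⟨hpre, ?_⟩
  -- basic Galois connection facts
  have hsub : ∀ I : Set D, I ⊆ F.obj ⁻¹' thickClosure (F.obj '' I) := by
    intro I x hx
    exact subset_thickClosure _ ⟨x, hx, rfl⟩
  have hcl_sub : ∀ (I : Set D) (J : Set E), IsThickSubcat J → F.obj '' I ⊆ J →
      thickClosure (F.obj '' I) ⊆ J := fun I J hJ h => thickClosure_subset hJ h
  tfae_have 1 → 5 := by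
    intro h1 I hI
    have hI' : IsThickSubcat (F.obj ⁻¹' thickClosure (F.obj '' I)) :=
      hpre _ (isThick_thickClosure _)
    refine h1 hI' hI ?_
    apply le_antisymm
    · exact hcl_sub _ _ (isThick_thickClosure _) (Set.image_subset_iff.2 (le_refl _))
    · exact thickClosure_mono (Set.image_mono (f := F.obj) (hsub I))
  tfae_have 5 → 1 := by
    intro h5 I hI I' hI' h
    have := h5 I hI
    rw [← h5 I hI, ← h5 I' hI']
    simp only at h
    rw [h]
  tfae_have 5 → 2 := by
    intro h5 I hI
    exact ⟨thickClosure (F.obj '' I), isThick_thickClosure _, h5 I hI⟩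
  tfae_have 2 → 5 := by
    intro h2 I hI
    obtain ⟨J, hJ, hJI⟩ := h2 I hI
    apply le_antisymm
    · rw [← hJI]
      refine Set.preimage_mono (hcl_sub _ _ hJ ?_)
      rw [Set.image_subset_iff, hJI]
    · exact hsub I
  tfae_have 5 → 3 := by
    intro h5 P hP heq
    have hbar : IsThickSubcat (thickInterAbove P) := isThick_thickInterAbove P
    have : P = thickInterAbove P := by
      conv_lhs => rw [← h5 P hP.1, heq]
      exact h5 _ hbar
    exact hP.2.2 this.ge
  tfae_have 3 → 4 := by
    intro h3 P hP
    -- find x ∈ P̄ with F x ∉ ⟨F(P)⟩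
    have : ∃ x ∈ thickInterAbove P, F.obj x ∉ thickClosure (F.obj '' P) := by
      by_contra hcon
      push_neg at hcon
      refine h3 P hP (le_antisymm ?_ ?_)
      · exact thickClosure_mono (Set.image_mono (f := F.obj) hP.2.1)
      · refine hcl_sub _ _ (isThick_thickClosure _) ?_
        rintro _ ⟨x, hx, rfl⟩
        exact hcon x hx
    obtain ⟨x, hxbar, hfx⟩ := this
    obtain ⟨Q, hAQ, hQprime, hfxQ, hfxQbar⟩ :
        ∃ Q : Set E, thickClosure (F.obj '' P) ⊆ Q ∧ IsPrimeThick Q ∧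
          F.obj x ∉ Q ∧ F.obj x ∈ thickInterAbove Q :=
      exists_prime_above (isThick_thickClosure (F.obj '' P)) hfx
    have hPQ : P ⊆ F.obj ⁻¹' Q := fun y hy =>
      hAQ (subset_thickClosure _ ⟨y, hy, rfl⟩)
    have hxP : x ∉ P := fun h => hfxQ (hPQ h)
    have hQP : F.obj ⁻¹' Q = P := by
      apply le_antisymm _ hPQ
      by_contra hsub'
      have hssub : P ⊂ F.obj ⁻¹' Q := ⟨hPQ, fun h => hsub' (fun y hy => h hy)⟩
      have : thickInterAbove P ⊆ F.obj ⁻¹' Q :=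
        thickInterAbove_subset (hpre Q hQprime.1) hssub
      exact hfxQ (this hxbar)
    refine ⟨Q, hQprime, hQP, ⟨?_, ?_⟩⟩
    · intro y hy
      exact hQprime.2.1 (hPQ hy)
    · intro h
      exact hxP (h hfxQbar)
  tfae_have 4 → 5 := by
    intro h4 I hI
    apply le_antisymm _ (hsub I)
    by_contra hcon
    have : ∃ x, x ∈ F.obj ⁻¹' thickClosure (F.obj '' I) ∧ x ∉ I := by
      by_contra h
      push_neg at h
      exact hcon h
    obtain ⟨x, hxcl, hxI⟩ := this
    obtain ⟨P, hIP, hPprime, hxP, -⟩ :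
        ∃ P : Set D, I ⊆ P ∧ IsPrimeThick P ∧ x ∉ P ∧ x ∈ thickInterAbove P :=
      exists_prime_above hI hxI
    obtain ⟨Q, hQprime, hQP, -⟩ := h4 P hPprime
    have hIQ : F.obj '' I ⊆ Q := by
      rintro _ ⟨y, hy, rfl⟩
      have : y ∈ F.obj ⁻¹' Q := by rw [hQP]; exact hIP hy
      exact this
    have : thickClosure (F.obj '' I) ⊆ Q := hcl_sub _ _ hQprime.1 hIQ
    have hxQ : x ∈ F.obj ⁻¹' Q := this hxcl
    rw [hQP] at hxQ
    exact hxP hxQ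
  tfae_finish
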